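/- Let X be a topological space, let U and V be clopen subsets of X, and let φ : U ≃ₜ V be a homeomorphism between the subspaces U and V. For f ∈ C₀(X, ℂ) (continuous functions vanishing at infinity) define α f : X → ℂ by (α f)(x) = f(φ x) for x ∈ U and (α f)(x) = 0 for x ∉ U, and define β analogously using φ⁻¹ : V ≃ₜ U. Then: (i) α f and β f belong to C₀(X, ℂ) for every f ∈ C₀(X, ℂ); (ii) α and β are ℂ-linear, multiplicative and star-preserving (α(f·k) = (α f)·(α k), α(conj f) = conj(α f), and likewise for β); (iii) α ∘ β ∘ α = α and β ∘ α ∘ β = β; (iv) star(α f)·k = α((star f)·(β k)) and star(β f)·k = β((star f)·(α k)) for all f, k ∈ C₀(X, ℂ). -/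

import Mathlib

open scoped ZeroAtInfty Classical

noncomputable def pullC0 {X : Type*} [TopologicalSpace X] (U V : Set X)
    (hU : IsClopen U) (hV : IsClopen V) (φ : U ≃ₜ V) (f : C₀(X, ℂ)) : C₀(X, ℂ) where
  toFun x := if h : x ∈ U then f (φ ⟨x, h⟩) else 0
  continuous_toFun := by
    rw [continuous_iff_continuousAt]
    intro x
    by_cases hx : x ∈ U
    · refine ContinuousOn.continuousAt ?_ (hU.isOpen.mem_nhds hx)
      rw [continuousOn_iff_continuous_restrict]
      have h1 : (U.domRestrict fun x => if h : x ∈ U then f (φ ⟨x, h⟩) else 0)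
          = fun u : U => f (φ u) := by
        funext u; simp [u.2]
      rw [h1]
      exact f.continuous.comp (continuous_subtype_val.comp φ.continuous)
    · refine ContinuousOn.continuousAt ?_ (hU.compl.isOpen.mem_nhds hx)
      rw [continuousOn_iff_continuous_restrict]
      have h1 : (Uᶜ.domRestrict fun x => if h : x ∈ U then f (φ ⟨x, h⟩) else 0)
          = fun _ => (0 : ℂ) := by
        funext u; exact dif_neg u.2
      rw [h1]; exact continuous_const
  zero_at_infty' := by
    rw [Filter.hasBasis_cocompact.tendsto_left_iff]
    intro t ht
    obtain ⟨K, hK, hKt⟩ :=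
      Filter.hasBasis_cocompact.tendsto_left_iff.mp f.zero_at_infty' t ht
    refine ⟨Subtype.val '' (φ.symm '' (Subtype.val ⁻¹' K)), ?_, ?_⟩
    · refine IsCompact.image ?_ continuous_subtype_val
      refine IsCompact.image ?_ φ.symm.continuous
      rw [Subtype.isCompact_iff, Subtype.image_preimage_coe]
      exact hK.inter_left hV.isClosed
    · intro x hx
      by_cases h : x ∈ U
      · simp only [dif_pos h]
        apply hKt
        intro hmem
        exact hx ⟨φ.symm ⟨φ ⟨x, h⟩, (φ ⟨x, h⟩).2⟩, ⟨⟨φ ⟨x, h⟩, (φ ⟨x, h⟩).2⟩, hmem, rfl⟩, by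
          simp⟩
      · simp only [dif_neg h]
        exact mem_of_mem_nhds ht

noncomputable def pullL {X : Type*} [TopologicalSpace X] (U V : Set X)
    (hU : IsClopen U) (hV : IsClopen V) (φ : U ≃ₜ V) : C₀(X, ℂ) →ₗ[ℂ] C₀(X, ℂ) where
  toFun := pullC0 U V hU hV φ
  map_add' f g := by
    ext x; by_cases h : x ∈ U <;> simp [pullC0, h]
  map_smul' c f := by
    ext x; by_cases h : x ∈ U <;> simp [pullC0, h]

theorem pullL_apply {X : Type*} [TopologicalSpace X] (U V : Set X)
    (hU : IsClopen U) (hV : IsClopen V) (φ : U ≃ₜ V) (f : C₀(X, ℂ)) (x : X) :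
    pullL U V hU hV φ f x = if h : x ∈ U then f (φ ⟨x, h⟩) else 0 := rfl

/-- A homeomorphism `φ` between clopen subsets `U`, `V` of a topological space `X` induces
linear maps `α`, `β` on `C₀(X, ℂ)` (given by `(α f)(x) = f(φ x)` on `U` and `0` off `U`, and
analogously `β` via `φ⁻¹`), which are multiplicative, star-preserving, satisfy
`α ∘ β ∘ α = α`, `β ∘ α ∘ β = β`, and the adjointness identities
`star (α f) * k = α (star f * β k)` and `star (β f) * k = β (star f * α k)`. -/
theorem stmt13 {X : Type*} [TopologicalSpace X]
    (U V : Set X) (hU : IsClopen U) (hV : IsClopen V) (φ : U ≃ₜ V) :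
    ∃ α β : C₀(X, ℂ) →ₗ[ℂ] C₀(X, ℂ),
      (∀ (f : C₀(X, ℂ)) (x : X), α f x = if h : x ∈ U then f (φ ⟨x, h⟩) else 0) ∧
      (∀ (f : C₀(X, ℂ)) (x : X), β f x = if h : x ∈ V then f (φ.symm ⟨x, h⟩) else 0) ∧
      (∀ f k : C₀(X, ℂ), α (f * k) = α f * α k) ∧
      (∀ f k : C₀(X, ℂ), β (f * k) = β f * β k) ∧
      (∀ f : C₀(X, ℂ), α (star f) = star (α f)) ∧
      (∀ f : C₀(X, ℂ), β (star f) = star (β f)) ∧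
      (∀ f : C₀(X, ℂ), α (β (α f)) = α f) ∧
      (∀ f : C₀(X, ℂ), β (α (β f)) = β f) ∧
      (∀ f k : C₀(X, ℂ), star (α f) * k = α (star f * β k)) ∧
      (∀ f k : C₀(X, ℂ), star (β f) * k = β (star f * α k)) := by
  refine ⟨pullL U V hU hV φ, pullL V U hV hU φ.symm,
    fun f x => rfl, fun f x => rfl, ?_, ?_, ?_, ?_, ?_, ?_, ?_, ?_⟩
  · intro f k; ext x
    by_cases h : x ∈ U <;> simp [pullL_apply, h]
  · intro f k; ext x
    by_cases h : x ∈ V <;> simp [pullL_apply, h]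
  · intro f; ext x
    by_cases h : x ∈ U <;> simp [pullL_apply, h]
  · intro f; ext x
    by_cases h : x ∈ V <;> simp [pullL_apply, h]
  · intro f; ext x
    by_cases h : x ∈ U
    · simp [pullL_apply, h, (φ ⟨x, h⟩).2, (φ.symm (φ ⟨x, h⟩)).2]
    · simp [pullL_apply, h]
  · intro f; ext x
    by_cases h : x ∈ V
    · simp [pullL_apply, h, (φ.symm ⟨x, h⟩).2, (φ (φ.symm ⟨x, h⟩)).2]
    · simp [pullL_apply, h]
  · intro f k; ext x
    by_cases h : x ∈ U
    · simp [pullL_apply, h, (φ ⟨x, h⟩).2]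
    · simp [pullL_apply, h]
  · intro f k; ext x
    by_cases h : x ∈ V
    · simp [pullL_apply, h, (φ.symm ⟨x, h⟩).2]
    · simp [pullL_apply, h]
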